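/- Let O be a valuation ring with maximal ideal m and residue field k = O/m. Let B = O[X₁,…,X_d] be the polynomial ring over O, let p ⊆ B be the prime ideal of polynomials all of whose coefficients lie in m, and let B_p be the localization of B at p. Then for every π ∈ m, the natural map B/πB → B_p/πB_p is universally injective as a map of O-modules: for every O-module N, the induced map N ⊗_O (B/πB) → N ⊗_O (B_p/πB_p) is injective. -/

import Mathlib

set_option maxHeartbeats 1000000
set_option synthInstance.maxHeartbeats 400000

open TensorProduct
open Classical in
noncomputable def MvPolynomial.scalarRTensor {R : Type} [CommRing R] {N : Type} [AddCommGroup N]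
    [Module R N] {σ : Type} : MvPolynomial σ R ⊗[R] N ≃ₗ[R] (σ →₀ ℕ) →₀ N :=
  (TensorProduct.congr (AddMonoidAlgebra.coeffLinearEquiv R) (LinearEquiv.refl R N)).trans
    (TensorProduct.finsuppScalarLeft R N _)

lemma MvPolynomial.scalarRTensor_apply_tmul_apply {R : Type} [CommRing R] {N : Type}
    [AddCommGroup N] [Module R N] {σ : Type} (p : MvPolynomial σ R) (n : N) (d : σ →₀ ℕ) :
    MvPolynomial.scalarRTensor (p ⊗ₜ[R] n) d = MvPolynomial.coeff d p • n := by
  simp [MvPolynomial.scalarRTensor]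
  rfl


section Helpers

variable {O : Type} [CommRing O] {N : Type} [AddCommGroup N] [Module O N]

lemma exact_mul_quot {A : Type} [CommRing A] [Algebra O A] (c : A) :
    Function.Exact (LinearMap.mulLeft O c)
      (Ideal.Quotient.mkₐ O (Ideal.span {c})).toLinearMap := by
  intro y
  constructor
  · intro hy
    have : y ∈ Ideal.span {c} := by
      rwa [AlgHom.toLinearMap_apply, Ideal.Quotient.mkₐ_eq_mk, Ideal.Quotient.eq_zero_iff_mem] at hy
    obtain ⟨b, hb⟩ := Ideal.mem_span_singleton'.mp this
    exact ⟨b, by simpa [LinearMap.mulLeft_apply, mul_comm] using hb⟩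
  · rintro ⟨b, rfl⟩
    rw [AlgHom.toLinearMap_apply, Ideal.Quotient.mkₐ_eq_mk, LinearMap.mulLeft_apply,
      Ideal.Quotient.eq_zero_iff_mem]
    exact Ideal.mul_mem_right _ _ (Ideal.subset_span rfl)

lemma mulLeft_rTensor_eq_smul {A : Type} [CommRing A] [Algebra O A] (c : A) (w : A ⊗[O] N) :
    LinearMap.rTensor N (LinearMap.mulLeft O c) w = c • w := by
  induction w using TensorProduct.induction_on with
  | zero => simp
  | tmul a n =>
    rw [LinearMap.rTensor_tmul, LinearMap.mulLeft_apply, smul_tmul', smul_eq_mul]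
  | add y z hy hz => rw [map_add, smul_add, hy, hz]

lemma fin_choice {α : Type} (π : O) (K : α →₀ N)
    (h : ∀ a, K a ∈ LinearMap.range (LinearMap.lsmul O N π)) :
    ∃ H : α →₀ N, K = π • H := by
  induction K using Finsupp.induction with
  | zero => exact ⟨0, by simp⟩
  | single_add a b f ha hb ih =>
    have hb' : b ∈ LinearMap.range (LinearMap.lsmul O N π) := by
      have := h a
      rwa [Finsupp.add_apply, Finsupp.single_eq_same, Finsupp.notMem_support_iff.mp ha,
        add_zero] at this
    obtain ⟨nb, hnb⟩ := hb'
    have hf : ∀ a', f a' ∈ LinearMap.range (LinearMap.lsmul O N π) := by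
      intro a'
      rcases eq_or_ne a' a with rfl | hne
      · rw [Finsupp.notMem_support_iff.mp ha]; exact zero_mem _
      · have := h a'
        rwa [Finsupp.add_apply, Finsupp.single_eq_of_ne hne, zero_add] at this
    obtain ⟨H, hH⟩ := ih hf
    refine ⟨Finsupp.single a nb + H, ?_⟩
    rw [smul_add, ← hH, Finsupp.smul_single]
    rw [show π • nb = b from hnb]

lemma flip_comm {M M' : Type} [AddCommGroup M] [AddCommGroup M'] [Module O M] [Module O M']
    (f : M →ₗ[O] M') (z : N ⊗[O] M) :
    LinearMap.rTensor N f (TensorProduct.comm O N M z) =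
      TensorProduct.comm O N M' (LinearMap.lTensor N f z) := by
  induction z using TensorProduct.induction_on with
  | zero => simp
  | tmul n m => rfl
  | add y z hy hz => simp only [map_add, hy, hz]

variable {d : ℕ}

lemma conv_smul (s : MvPolynomial (Fin d) O) (x : MvPolynomial (Fin d) O ⊗[O] N)
    (μ : Fin d →₀ ℕ) :
    MvPolynomial.scalarRTensor (s • x) μ =
      ∑ pr ∈ Finset.HasAntidiagonal.antidiagonal μ, MvPolynomial.coeff pr.1 s •
        (MvPolynomial.scalarRTensor x) pr.2 := by
  induction x using TensorProduct.induction_on with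
  | zero => simp
  | tmul b n =>
    rw [smul_tmul', smul_eq_mul]
    rw [MvPolynomial.scalarRTensor_apply_tmul_apply, MvPolynomial.coeff_mul]
    rw [Finset.sum_smul]
    refine Finset.sum_congr rfl fun pr _ => ?_
    rw [MvPolynomial.scalarRTensor_apply_tmul_apply, mul_smul]
  | add y z hy hz =>
    rw [smul_add, map_add, Finsupp.add_apply, hy, hz, ← Finset.sum_add_distrib]
    refine Finset.sum_congr rfl fun pr _ => ?_
    rw [map_add, Finsupp.add_apply, smul_add]

lemma Csmul (c : O) (x : MvPolynomial (Fin d) O ⊗[O] N) :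
    (MvPolynomial.C c : MvPolynomial (Fin d) O) • x = c • x := by
  induction x using TensorProduct.induction_on with
  | zero => simp
  | tmul b n => rw [smul_tmul', smul_tmul', smul_eq_mul, MvPolynomial.C_mul']
  | add y z hy hz => rw [smul_add, smul_add, hy, hz]

end Helpers

section Gmap

variable {O : Type} [CommRing O] {d : ℕ} {N : Type} [AddCommGroup N] [Module O N]
  (p : Ideal (MvPolynomial (Fin d) O)) [p.IsPrime]

noncomputable def Gmap :
    (MvPolynomial (Fin d) O ⊗[O] N) →ₗ[MvPolynomial (Fin d) O]
      ((Localization.AtPrime p) ⊗[O] N) :=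
  (TensorProduct.AlgebraTensorModule.cancelBaseChange O (MvPolynomial (Fin d) O)
      (MvPolynomial (Fin d) O) (Localization.AtPrime p) N).toLinearMap.comp
    (TensorProduct.mk (MvPolynomial (Fin d) O) (Localization.AtPrime p)
      (MvPolynomial (Fin d) O ⊗[O] N) 1)

lemma Gmap_tmul (b : MvPolynomial (Fin d) O) (n : N) :
    Gmap (N := N) p (b ⊗ₜ n) = (algebraMap (MvPolynomial (Fin d) O) (Localization.AtPrime p) b) ⊗ₜ n := by
  simp only [Gmap, LinearMap.comp_apply, TensorProduct.mk_apply, LinearEquiv.coe_coe,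
    TensorProduct.AlgebraTensorModule.cancelBaseChange_tmul]
  rw [Algebra.smul_def, mul_one]

noncomputable instance : IsLocalizedModule p.primeCompl (Gmap (N := N) p) := by
  rw [Gmap]
  have h1 : IsLocalizedModule p.primeCompl
      (TensorProduct.mk (MvPolynomial (Fin d) O) (Localization.AtPrime p)
        (MvPolynomial (Fin d) O ⊗[O] N) 1) :=
    (isLocalizedModule_iff_isBaseChange p.primeCompl (Localization.AtPrime p) _).mpr
      (TensorProduct.isBaseChange _ _ _)
  exact IsLocalizedModule.of_linearEquiv _ _ _

end Gmap

open Finsupp MvPolynomial in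
lemma core_mccoy {R : Type} [CommRing R] {N' : Type} [AddCommGroup N'] [Module R N']
    {d : ℕ} (s : MvPolynomial (Fin d) R) {m₀ : Fin d →₀ ℕ} (hu : IsUnit (MvPolynomial.coeff m₀ s))
    (F : (Fin d →₀ ℕ) →₀ N')
    (hconv : ∀ μ : Fin d →₀ ℕ,
      ∑ pr ∈ Finset.HasAntidiagonal.antidiagonal μ, MvPolynomial.coeff pr.1 s • F pr.2 = 0) :
    F = 0 := by
  suffices H : ∀ (n : ℕ) (F : (Fin d →₀ ℕ) →₀ N'), F.support.card ≤ n →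
      (∀ μ, ∑ pr ∈ Finset.HasAntidiagonal.antidiagonal μ, MvPolynomial.coeff pr.1 s • F pr.2 = 0) → F = 0 by
    exact H F.support.card F le_rfl hconv
  intro n
  induction n with
  | zero =>
    intro F hF _
    exact Finsupp.card_support_eq_zero.mp (Nat.le_zero.mp hF)
  | succ n IH =>
    intro F hcard hconv
    by_cases hF0 : F = 0
    · exact hF0
    have hsupp : F.support.Nonempty := Finsupp.support_nonempty_iff.mpr hF0
    obtain ⟨T, hTmem, hTmax⟩ :=
      F.support.exists_max_image (toLex : (Fin d →₀ ℕ) → Lex (Fin d →₀ ℕ)) hsupp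
    have key : ∀ (k : ℕ) (m : Fin d →₀ ℕ),
        (s.support.filter (fun m' => toLex m < toLex m')).card < k →
        MvPolynomial.coeff m s • F = 0 := by
      intro k
      induction k with
      | zero => intro m hm; exact absurd hm (Nat.not_lt_zero _)
      | succ k IHk =>
        intro m hm
        have hterm : ∀ pr ∈ Finset.HasAntidiagonal.antidiagonal (m + T), pr ≠ (m, T) →
            MvPolynomial.coeff pr.1 s • F pr.2 = 0 := by
          intro pr hpr hne
          have hsum : pr.1 + pr.2 = m + T := Finset.HasAntidiagonal.mem_antidiagonal.mp hpr
          rcases lt_trichotomy (toLex pr.1) (toLex m) with hlt | heq | hgt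
          · have hF2 : F pr.2 = 0 := by
              by_contra h0
              have h2 : pr.2 ∈ F.support := Finsupp.mem_support_iff.mpr h0
              have hle := hTmax pr.2 h2
              have hlt2 : toLex (pr.1 + pr.2) < toLex (m + T) :=
                add_lt_add_of_lt_of_le hlt hle
              rw [hsum] at hlt2
              exact lt_irrefl _ hlt2
            rw [hF2, smul_zero]
          · have h1 : pr.1 = m := toLex.injective heq
            have h2 : pr.2 = T := by
              rw [h1] at hsum
              exact add_left_cancel hsum
            exact absurd (Prod.ext h1 h2) hne
          · by_cases hzs : MvPolynomial.coeff pr.1 s = 0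
            · rw [hzs, zero_smul]
            have hmem : pr.1 ∈ s.support := MvPolynomial.mem_support_iff.mpr hzs
            have hss : (s.support.filter (fun m' => toLex pr.1 < toLex m')) ⊂
                s.support.filter (fun m' => toLex m < toLex m') := by
              constructor
              · intro a ha
                rw [Finset.mem_filter] at ha ⊢
                exact ⟨ha.1, hgt.trans ha.2⟩
              · intro hsub
                have : pr.1 ∈ s.support.filter (fun m' => toLex pr.1 < toLex m') :=
                  hsub (Finset.mem_filter.mpr ⟨hmem, hgt⟩)
                rw [Finset.mem_filter] at this
                exact lt_irrefl _ this.2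
            have hc2 : (s.support.filter (fun m' => toLex pr.1 < toLex m')).card < k :=
              lt_of_lt_of_le (Finset.card_lt_card hss) (Nat.lt_succ_iff.mp hm)
            have h0 := IHk pr.1 hc2
            calc MvPolynomial.coeff pr.1 s • F pr.2
                = (MvPolynomial.coeff pr.1 s • F) pr.2 := (Finsupp.smul_apply _ _ _).symm
              _ = 0 := by rw [h0]; rfl
        have hsT : MvPolynomial.coeff m s • F T = 0 := by
          have hc := hconv (m + T)
          rwa [Finset.sum_eq_single_of_mem (m, T) (Finset.HasAntidiagonal.mem_antidiagonal.mpr rfl)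
            (fun pr h hne => hterm pr h hne)] at hc
        set F' := MvPolynomial.coeff m s • F with hF'
        have hsuppF' : F'.support ⊆ F.support.erase T := by
          intro a ha
          rcases eq_or_ne a T with rfl | hne
          · exfalso
            have h1 : F' a ≠ 0 := Finsupp.mem_support_iff.mp ha
            apply h1
            rw [hF', Finsupp.smul_apply, hsT]
          · exact Finset.mem_erase.mpr ⟨hne, Finsupp.support_smul ha⟩
        have hcardF' : F'.support.card ≤ n := by
          have h1 : F'.support.card ≤ (F.support.erase T).card := Finset.card_le_card hsuppF'
          rw [Finset.card_erase_of_mem hTmem] at h1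
          omega
        have hconvF' : ∀ μ, ∑ pr ∈ Finset.HasAntidiagonal.antidiagonal μ,
            MvPolynomial.coeff pr.1 s • F' pr.2 = 0 := by
          intro μ
          have heq : ∀ pr : (Fin d →₀ ℕ) × (Fin d →₀ ℕ),
              MvPolynomial.coeff pr.1 s • F' pr.2 =
              MvPolynomial.coeff m s • (MvPolynomial.coeff pr.1 s • F pr.2) := by
            intro pr
            rw [hF', Finsupp.smul_apply, smul_comm]
          rw [Finset.sum_congr rfl (fun pr _ => heq pr), ← Finset.smul_sum, hconv μ, smul_zero]
        exact IH F' hcardF' hconvF'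
    have hkill := key ((s.support.filter (fun m' => toLex m₀ < toLex m')).card + 1) m₀
      (Nat.lt_succ_self _)
    rw [← smul_zero (MvPolynomial.coeff m₀ s)] at hkill
    exact hu.smul_left_cancel.mp hkill

section Main

variable {O : Type} [CommRing O] {d : ℕ}
  (p : Ideal (MvPolynomial (Fin d) O)) [hp : p.IsPrime] (π : O)

local notation "B" => MvPolynomial (Fin d) O
local notation "L" => Localization.AtPrime p

lemma main_aux
    (hunit : ∀ s : B, s ∉ p → ∃ m₀, IsUnit (MvPolynomial.coeff m₀ s))
    (N : Type) [AddCommGroup N] [Module O N]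
    (u : (B ⧸ (Ideal.span {MvPolynomial.C π} : Ideal B)) →ₗ[O]
         (L ⧸ (Ideal.span {algebraMap B L (MvPolynomial.C π)} : Ideal L)))
    (hu : ∀ b, u (Ideal.Quotient.mk _ b) = Ideal.Quotient.mk _ (algebraMap B L b)) :
    Function.Injective (LinearMap.rTensor N u) := by
  classical
  suffices H : ∀ x, LinearMap.rTensor N u x = 0 → x = 0 by
    intro a b hab
    have h := H (a - b) (by rw [map_sub, hab, sub_self])
    exact sub_eq_zero.mp h
  intro x hx0
  have hqBsurj : Function.Surjective
      ((Ideal.Quotient.mkₐ O (Ideal.span {MvPolynomial.C π} : Ideal B)).toLinearMap) := by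
    intro y
    obtain ⟨b, hb⟩ := Ideal.Quotient.mk_surjective (I := Ideal.span {MvPolynomial.C π}) y
    exact ⟨b, by simpa using hb⟩
  obtain ⟨x'', rfl⟩ := LinearMap.rTensor_surjective N hqBsurj x
  -- composed maps agree
  have hcomp : u.comp (Ideal.Quotient.mkₐ O (Ideal.span {MvPolynomial.C π} : Ideal B)).toLinearMap
      = ((Ideal.Quotient.mkₐ O
          (Ideal.span {algebraMap B L (MvPolynomial.C π)} : Ideal L)).toLinearMap).comp
        (IsScalarTower.toAlgHom O B L).toLinearMap := by
    apply LinearMap.ext; intro b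
    simpa using hu b
  have hGg : ∀ w : (MvPolynomial (Fin d) O) ⊗[O] N,
      LinearMap.rTensor N (IsScalarTower.toAlgHom O B L).toLinearMap w
      = Gmap (N := N) p w := by
    intro w
    induction w using TensorProduct.induction_on with
    | zero => simp
    | tmul b n => rw [LinearMap.rTensor_tmul, Gmap_tmul]; simp
    | add y z hy hz => rw [map_add, map_add, hy, hz]
  have h1 : LinearMap.rTensor N (Ideal.Quotient.mkₐ O
      (Ideal.span {algebraMap B L (MvPolynomial.C π)} : Ideal L)).toLinearMap
      (Gmap (N := N) p x'') = 0 := by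
    have h2 : LinearMap.rTensor N (u.comp
        (Ideal.Quotient.mkₐ O (Ideal.span {MvPolynomial.C π} : Ideal B)).toLinearMap) x'' = 0 := by
      rw [LinearMap.rTensor_comp, LinearMap.comp_apply]
      exact hx0
    rw [hcomp, LinearMap.rTensor_comp, LinearMap.comp_apply, hGg x''] at h2
    exact h2
  -- exactness on the L side
  have hexL := rTensor_exact (N := L) N
    (exact_mul_quot (O := O) (A := L) (algebraMap B L (MvPolynomial.C π)))
    Ideal.Quotient.mk_surjective
  obtain ⟨y, hy⟩ := (hexL _).mp h1
  rw [mulLeft_rTensor_eq_smul] at hy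
  -- hy : (algebraMap B L (C π)) • y = Gmap p x''  (L-action)
  have hyB : (MvPolynomial.C π : B) • y = Gmap (N := N) p x'' := by
    rw [← hy, algebraMap_smul]
  obtain ⟨⟨z, s⟩, hz⟩ := IsLocalizedModule.surj p.primeCompl (Gmap (N := N) p) y
  rw [Submonoid.smul_def] at hz
  -- combine
  have hGeq : Gmap (N := N) p ((s : B) • x'') = Gmap (N := N) p ((MvPolynomial.C π : B) • z) := by
    rw [map_smul, map_smul, ← hyB, ← hz, smul_smul, smul_smul, mul_comm]
  obtain ⟨t, ht⟩ := IsLocalizedModule.exists_of_eq (S := p.primeCompl) (f := Gmap (N := N) p) hGeq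
  rw [Submonoid.smul_def, Submonoid.smul_def] at ht
  -- ht : t • (s • x'') = t • (C π • z)
  have hkey : (((t * s : p.primeCompl) : B)) • x''
      = (MvPolynomial.C π : B) • ((t : B) • z) := by
    rw [Submonoid.coe_mul, ← smul_smul, ht, smul_smul, mul_comm, ← smul_smul]
  -- unit coefficient
  obtain ⟨m₀, hm₀⟩ := hunit ((t * s : p.primeCompl) : B) (t * s).2
  -- pass to Finsupp coefficients mod P
  have hmemP : ∀ μ, (MvPolynomial.scalarRTensor (x'' : B ⊗[O] N)) μ
      ∈ LinearMap.range (LinearMap.lsmul O N π) := by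
    set P := LinearMap.range (LinearMap.lsmul O N π) with hP
    set F : (Fin d →₀ ℕ) →₀ (N ⧸ P) :=
      (MvPolynomial.scalarRTensor (x'' : B ⊗[O] N)).mapRange P.mkQ (map_zero _) with hF
    have hFconv : ∀ μ, ∑ pr ∈ Finset.HasAntidiagonal.antidiagonal μ,
        MvPolynomial.coeff pr.1 (((t * s : p.primeCompl) : B)) • F pr.2 = 0 := by
      intro μ
      have hstep : MvPolynomial.scalarRTensor ((((t * s : p.primeCompl) : B)) • x'') μ
          = π • (MvPolynomial.scalarRTensor ((t : B) • z) μ) := by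
        rw [hkey, Csmul, map_smul, Finsupp.smul_apply]
      have hsum : ∑ pr ∈ Finset.HasAntidiagonal.antidiagonal μ,
          MvPolynomial.coeff pr.1 (((t * s : p.primeCompl) : B)) • F pr.2
          = P.mkQ (∑ pr ∈ Finset.HasAntidiagonal.antidiagonal μ,
              MvPolynomial.coeff pr.1 (((t * s : p.primeCompl) : B)) •
                (MvPolynomial.scalarRTensor (x'' : B ⊗[O] N)) pr.2) := by
        rw [map_sum]
        refine Finset.sum_congr rfl fun pr _ => ?_
        rw [map_smul, hF, Finsupp.mapRange_apply]
      rw [hsum, ← conv_smul, hstep]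
      rw [Submodule.mkQ_apply, Submodule.Quotient.mk_eq_zero]
      exact ⟨MvPolynomial.scalarRTensor ((t : B) • z) μ, rfl⟩
    have hF0 := core_mccoy _ hm₀ F hFconv
    intro μ
    have hμ : F μ = 0 := by rw [hF0]; rfl
    rwa [hF, Finsupp.mapRange_apply, Submodule.mkQ_apply, Submodule.Quotient.mk_eq_zero] at hμ
  obtain ⟨Hf, hHf⟩ := fin_choice π (MvPolynomial.scalarRTensor (x'' : B ⊗[O] N)) hmemP
  have hx'' : x'' = (MvPolynomial.C π : B) • (MvPolynomial.scalarRTensor.symm Hf) := by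
    rw [Csmul, ← map_smul, ← hHf]
    exact (LinearEquiv.symm_apply_apply _ _).symm
  -- conclude via exactness on the B side
  have hexB := rTensor_exact (N := B) N
    (exact_mul_quot (O := O) (A := B) (MvPolynomial.C π))
    Ideal.Quotient.mk_surjective
  apply (hexB _).mpr
  refine ⟨MvPolynomial.scalarRTensor.symm Hf, ?_⟩
  rw [mulLeft_rTensor_eq_smul, ← hx'']

end Main


/-- Let `O` be a valuation ring with maximal ideal `m`, let
`B = O[X₁,…,X_d]`, let `p ⊆ B` be the prime ideal of polynomials all of whose
coefficients lie in `m`, and let `B_p` be the localization of `B` at `p`.  Then for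
every `π ∈ m` the natural map `B/πB → B_p/πB_p` is universally injective as a map of
`O`-modules: for every `O`-module `N`, the induced map
`N ⊗[O] (B/πB) → N ⊗[O] (B_p/πB_p)` is injective. -/
theorem quotient_map_to_localization_universally_injective
    (O : Type) [CommRing O] [IsDomain O] [ValuationRing O]
    (d : ℕ) (p : Ideal (MvPolynomial (Fin d) O))
    (hpdef : ∀ f : MvPolynomial (Fin d) O,
      f ∈ p ↔ ∀ m : Fin d →₀ ℕ, MvPolynomial.coeff m f ∈ IsLocalRing.maximalIdeal O)
    (hp : p.IsPrime)
    (π : O) (hπ : π ∈ IsLocalRing.maximalIdeal O) :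
    ∀ (N : Type) [AddCommGroup N] [Module O N],
      Function.Injective
        (LinearMap.lTensor N
          (Ideal.quotientMapₐ (I := Ideal.span {MvPolynomial.C π})
            (Ideal.span {algebraMap (MvPolynomial (Fin d) O) (Localization.AtPrime p)
              (MvPolynomial.C π)})
            (IsScalarTower.toAlgHom O (MvPolynomial (Fin d) O) (Localization.AtPrime p))
            (by
              rw [← Ideal.map_le_iff_le_comap, Ideal.map_span, Set.image_singleton]
              exact le_of_eq (by rw [IsScalarTower.coe_toAlgHom']))).toLinearMap) := by
  intro N _ _
  have hunit : ∀ s : MvPolynomial (Fin d) O, s ∉ p →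
      ∃ m₀, IsUnit (MvPolynomial.coeff m₀ s) := by
    intro s hs
    by_contra hc
    push_neg at hc
    apply hs
    rw [hpdef]
    intro m
    rw [IsLocalRing.mem_maximalIdeal, mem_nonunits_iff]
    exact hc m
  have hu : ∀ b : MvPolynomial (Fin d) O,
      (Ideal.quotientMapₐ (I := Ideal.span {MvPolynomial.C π})
            (Ideal.span {algebraMap (MvPolynomial (Fin d) O) (Localization.AtPrime p)
              (MvPolynomial.C π)})
            (IsScalarTower.toAlgHom O (MvPolynomial (Fin d) O) (Localization.AtPrime p))
            (by
              rw [← Ideal.map_le_iff_le_comap, Ideal.map_span, Set.image_singleton]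
              exact le_of_eq (by rw [IsScalarTower.coe_toAlgHom']))).toLinearMap
        (Ideal.Quotient.mk _ b)
      = Ideal.Quotient.mk _
          (algebraMap (MvPolynomial (Fin d) O) (Localization.AtPrime p) b) := by
    intro b
    simp only [AlgHom.toLinearMap_apply, Ideal.quotient_map_mkₐ, Ideal.Quotient.mkₐ_eq_mk,
      IsScalarTower.coe_toAlgHom']
  have hinj := main_aux p π hunit N _ hu
  intro a b hab
  apply (TensorProduct.comm O N _).injective
  apply hinj
  rw [flip_comm, flip_comm, hab]
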